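/- arXiv:0712.2022 — 2 statements merged into one kernel-verified Lean document; each statement's English description precedes it below -/
import Mathlib

section
/- For positive integers N and q, N lies in the Hasse interval [q+1-2√q, q+1+2√q] if and only if q lies in the Hasse interval [N+1-2√N, N+1+2√N]. -/
lemma hasse_aux (a b : ℝ) (ha : 1 ≤ a) (hb : 1 ≤ b) :
    (a + 1 - 2 * Real.sqrt a ≤ b ∧ b ≤ a + 1 + 2 * Real.sqrt a) ↔
    (Real.sqrt a ≤ Real.sqrt b + 1 ∧ Real.sqrt b ≤ Real.sqrt a + 1) := by
  have ha' := Real.sq_sqrt (by linarith : (0:ℝ) ≤ a)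
  have hb' := Real.sq_sqrt (by linarith : (0:ℝ) ≤ b)
  have ha0 : 1 ≤ Real.sqrt a := by
    rw [show (1:ℝ) = Real.sqrt 1 by simp]; exact Real.sqrt_le_sqrt ha
  have hb0 : 1 ≤ Real.sqrt b := by
    rw [show (1:ℝ) = Real.sqrt 1 by simp]; exact Real.sqrt_le_sqrt hb
  constructor
  · rintro ⟨h1, h2⟩
    constructor
    · nlinarith [sq_nonneg (Real.sqrt a - Real.sqrt b - 1)]
    · nlinarith [sq_nonneg (Real.sqrt b - Real.sqrt a - 1)]
  · rintro ⟨h1, h2⟩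
    constructor
    · nlinarith [sq_nonneg (Real.sqrt a - Real.sqrt b)]
    · nlinarith [sq_nonneg (Real.sqrt a - Real.sqrt b)]

/-- For positive integers `N` and `q`, `N` lies in the Hasse interval
`[q+1-2√q, q+1+2√q]` if and only if `q` lies in `[N+1-2√N, N+1+2√N]`. -/
theorem hasse_interval_symm (N q : ℕ) (hN : 0 < N) (hq : 0 < q) :
    ((q : ℝ) + 1 - 2 * Real.sqrt q ≤ (N : ℝ) ∧ (N : ℝ) ≤ (q : ℝ) + 1 + 2 * Real.sqrt q) ↔
    ((N : ℝ) + 1 - 2 * Real.sqrt N ≤ (q : ℝ) ∧ (q : ℝ) ≤ (N : ℝ) + 1 + 2 * Real.sqrt N) := by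
  rw [hasse_aux _ _ (by exact_mod_cast hq) (by exact_mod_cast hN),
      hasse_aux _ _ (by exact_mod_cast hN) (by exact_mod_cast hq)]
  tauto
end

section
/- Let E be an elliptic curve over a finite field F_p with p prime, and let N be a prime with N > (√p + 1)². If there exists a point P ∈ E(F_p) with P ≠ 0 and N·P = 0, then E(F_p) has exactly N elements. -/
open WeierstrassCurve Polynomial

lemma card_le_aux (p : ℕ) [Fact p.Prime] (W : Affine (ZMod p)) [Fintype W.Point] :
    Fintype.card W.Point ≤ 2 * p + 1 := by
  classical
  -- set of affine points satisfying the equation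
  let E : Finset (ZMod p × ZMod p) := Finset.univ.filter (fun q => W.Equation q.1 q.2)
  have hinj : Fintype.card W.Point ≤ Fintype.card (Option E) := by
    apply Fintype.card_le_of_injective (fun P => match P with
      | .zero => none
      | @WeierstrassCurve.Affine.Point.some _ _ _ x y h =>
          some ⟨(x, y), by simp [E, h.left]⟩)
    intro P Q hPQ
    match P, Q with
    | .zero, .zero => rfl
    | .zero, .some _ _ h => simp at hPQ
    | .some _ _ h, .zero => simp at hPQ
    | @WeierstrassCurve.Affine.Point.some _ _ _ x y h,
      @WeierstrassCurve.Affine.Point.some _ _ _ x' y' h' =>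
        simp only [Option.some.injEq, Subtype.mk.injEq, Prod.mk.injEq] at hPQ
        obtain ⟨rfl, rfl⟩ := hPQ
        rfl
  have hE : E.card ≤ 2 * p := by
    rw [Finset.card_eq_sum_card_fiberwise (f := Prod.fst) (t := Finset.univ) (fun x _ => Finset.mem_univ _)]
    have : ∀ x : ZMod p,
        (E.filter (fun q => q.1 = x)).card ≤ 2 := by
      intro x
      set q : Polynomial (ZMod p) :=
        X ^ 2 + C (W.a₁ * x + W.a₃) * X - C (x ^ 3 + W.a₂ * x ^ 2 + W.a₄ * x + W.a₆) with hq
      have hqd : q.natDegree = 2 := by rw [hq]; compute_degree!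
      have hqm : q.Monic := by rw [hq]; monicity!
      have hsub : E.filter (fun q => q.1 = x) ⊆ (q.roots.toFinset.image (fun y => (x, y))) := by
        intro ⟨a, b⟩ hab
        simp only [Finset.mem_filter, Finset.mem_univ, true_and, E] at hab
        obtain ⟨heq, rfl⟩ := hab
        rw [W.equation_iff] at heq
        simp only [Finset.mem_image, Multiset.mem_toFinset, mem_roots hqm.ne_zero]
        exact ⟨b, by rw [hq]; simp [IsRoot.def]; ring_nf; ring_nf at heq; linear_combination heq, rfl⟩
      calc (E.filter (fun q => q.1 = x)).card
          ≤ (q.roots.toFinset.image (fun y => (x, y))).card := Finset.card_le_card hsub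
        _ ≤ q.roots.toFinset.card := Finset.card_image_le
        _ ≤ Multiset.card q.roots := q.roots.toFinset_card_le
        _ ≤ q.natDegree := q.card_roots'
        _ = 2 := hqd
    calc ∑ x : ZMod p, (E.filter (fun q => q.1 = x)).card ≤ ∑ _x : ZMod p, 2 :=
          Finset.sum_le_sum (fun x _ => this x)
      _ = 2 * p := by simp [ZMod.card, mul_comm]
  calc Fintype.card W.Point ≤ Fintype.card (Option E) := hinj
    _ = E.card + 1 := by simp
    _ ≤ 2 * p + 1 := by omega

/-- Let `E` be an elliptic curve over `F_p` with `p` prime, and let `N` be a prime with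
`N > (√p + 1)²`. If there is a point `P ≠ 0` on `E` with `N·P = 0`, then `E(F_p)` has
exactly `N` elements. -/
theorem card_eq_prime_of_torsion_point (p N : ℕ) [Fact p.Prime] (hN : N.Prime)
    (W : Affine (ZMod p)) [W.IsElliptic] [Fintype W.Point]
    (hNp : (Real.sqrt p + 1) ^ 2 < (N : ℝ))
    (h : ∃ P : W.Point, P ≠ 0 ∧ N • P = 0) :
    Fintype.card W.Point = N := by
  obtain ⟨P, hP0, hPN⟩ := h
  have hord : addOrderOf P = N := by
    have hdvd : addOrderOf P ∣ N := addOrderOf_dvd_of_nsmul_eq_zero hPN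
    rcases (Nat.Prime.eq_one_or_self_of_dvd hN _ hdvd) with h1 | h1
    · rw [AddMonoid.addOrderOf_eq_one_iff] at h1; exact absurd h1 hP0
    · exact h1
  have hNdvd : N ∣ Fintype.card W.Point := hord ▸ addOrderOf_dvd_card
  have hle : Fintype.card W.Point ≤ 2 * p + 1 := card_le_aux p W
  -- from hNp, N > p + 1, so N ≥ p + 2, so 2N > 2p + 1
  have hpN : (p : ℝ) + 1 < N := by
    have h1 : (p : ℝ) + 1 ≤ (Real.sqrt p + 1) ^ 2 := by
      have hs : Real.sqrt p ^ 2 = p := Real.sq_sqrt (by positivity)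
      nlinarith [Real.sqrt_nonneg (p : ℝ)]
    linarith
  have hpN' : p + 1 < N := by exact_mod_cast hpN
  have hlt : Fintype.card W.Point < 2 * N := by omega
  have hpos : 0 < Fintype.card W.Point := Fintype.card_pos
  obtain ⟨k, hk⟩ := hNdvd
  have : k = 1 := by nlinarith [hN.pos]
  subst this
  simpa using hk
end
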